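/- Pathwise (smooth-noise) Stochastic Decomposition Formula (Theorem 2.2): Suppose g : ℝ → ℝ is differentiable with g(t) > 0 for all t ≥ 0 and g'(t) = g(t)·(r − r·g(t)) + σ·g(t)·w'(t) for all t ≥ 0, and Ψ : ℝ → (Fin n → ℝ) is differentiable with Ψᵢ'(τ) = Ψᵢ(τ)·(r + Σⱼ a i j · Ψⱼ(τ)) for all τ ≥ 0 and every index i. Define Φ(t) := g(t) • Ψ(∫₀ᵗ g(s) ds). Then Φ(0) = g(0) • Ψ(0), and for every t ≥ 0 and every i, Φᵢ is differentiable at t with Φᵢ'(t) = Φᵢ(t)·(r + Σⱼ a i j · Φⱼ(t)) + σ·Φᵢ(t)·w'(t). That is, the solution of the noisy Lotka–Volterra system is the noisy logistic scalar factor g(t) times the deterministic Lotka–Volterra solution evaluated at the random time ∫₀ᵗ g(s) ds. -/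

import Mathlib

open Real Filter Topology intervalIntegral

/-- **Pathwise Stochastic Decomposition Formula** (Theorem 2.2, smooth-noise form).
If `g` solves the noisy logistic equation `g' = g(r - r g) + σ g w'` on `[0,∞)` with `g > 0`,
and `Ψ` solves the deterministic Lotka–Volterra system `Ψᵢ' = Ψᵢ (r + Σⱼ aᵢⱼ Ψⱼ)` on `[0,∞)`,
then `Φ(t) := g(t) • Ψ(∫₀ᵗ g)` satisfies `Φ(0) = g(0) • Ψ(0)` and solves the noisy
Lotka–Volterra system `Φᵢ' = Φᵢ (r + Σⱼ aᵢⱼ Φⱼ) + σ Φᵢ w'` on `[0,∞)`. -/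
theorem stochastic_decomposition_formula_pathwise
    (n : ℕ) (r σ : ℝ) (hr : 0 < r) (a : Fin n → Fin n → ℝ)
    (w : ℝ → ℝ) (hw : Differentiable ℝ w)
    (g : ℝ → ℝ) (hg : Differentiable ℝ g)
    (hgpos : ∀ t : ℝ, 0 ≤ t → 0 < g t)
    (hg' : ∀ t : ℝ, 0 ≤ t →
      deriv g t = g t * (r - r * g t) + σ * g t * deriv w t)
    (Ψ : ℝ → Fin n → ℝ) (hΨ : ∀ i, Differentiable ℝ fun τ => Ψ τ i)
    (hΨ' : ∀ τ : ℝ, 0 ≤ τ → ∀ i,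
      deriv (fun τ => Ψ τ i) τ = Ψ τ i * (r + ∑ j, a i j * Ψ τ j))
    (Φ : ℝ → Fin n → ℝ)
    (hΦ : ∀ t : ℝ, Φ t = g t • Ψ (∫ s in (0:ℝ)..t, g s)) :
    Φ 0 = g 0 • Ψ 0 ∧
    ∀ t : ℝ, 0 ≤ t → ∀ i,
      HasDerivAt (fun t => Φ t i)
        (Φ t i * (r + ∑ j, a i j * Φ t j) + σ * Φ t i * deriv w t) t := by
  set G : ℝ → ℝ := fun t => ∫ s in (0:ℝ)..t, g s with hGdef
  constructor
  · rw [hΦ 0]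
    simp [hGdef]
  · intro t ht i
    have hG : HasDerivAt G (g t) t :=
      (hg.continuous.integral_hasStrictDerivAt 0 t).hasDerivAt
    have hGnonneg : 0 ≤ G t :=
      intervalIntegral.integral_nonneg ht (fun s hs => (hgpos s hs.1).le)
    have hΨi : HasDerivAt (fun τ => Ψ τ i)
        (Ψ (G t) i * (r + ∑ j, a i j * Ψ (G t) j)) (G t) := by
      have := ((hΨ i) (G t)).hasDerivAt
      rwa [hΨ' (G t) hGnonneg i] at this
    have hcomp : HasDerivAt (fun t => Ψ (G t) i)
        ((Ψ (G t) i * (r + ∑ j, a i j * Ψ (G t) j)) * g t) t :=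
      hΨi.comp t hG
    have hgt : HasDerivAt g (g t * (r - r * g t) + σ * g t * deriv w t) t := by
      have := (hg t).hasDerivAt
      rwa [hg' t ht] at this
    have hmul : HasDerivAt (fun t => g t * Ψ (G t) i) _ t := hgt.mul hcomp
    have hfun : (fun t => Φ t i) = fun t => g t * Ψ (G t) i := by
      funext u; rw [hΦ u]; rfl
    have hΦt : ∀ j, Φ t j = g t * Ψ (G t) j := by
      intro j; rw [hΦ t]; rfl
    rw [hfun]
    convert hmul using 1
    simp only [hΦt]
    have hsum : ∑ j, a i j * (g t * Ψ (G t) j) = g t * ∑ j, a i j * Ψ (G t) j := by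
      rw [Finset.mul_sum]; exact Finset.sum_congr rfl fun j _ => by ring
    rw [hsum]
    ring
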